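/- Let G be the simple graph on vertex set {1,...,7} with edge set E = {{1,2},{1,4},{1,5},{1,6},{1,7},{2,3},{2,5},{2,7},{3,4},{3,5},{3,6},{3,7},{4,5},{4,7},{5,6},{6,7}} (the graph G1233 of the atlas). Then msr(G) = 3; that is, there exists a 7×7 Hermitian positive semidefinite complex matrix with graph G of rank 3, and every 7×7 Hermitian positive semidefinite complex matrix with graph G has rank at least 3. -/
import Mathlib

open Matrix ComplexOrder

/-- The edge set of the graph G1233 on vertices 1,...,7. -/
def edgesG1233 : Set (Sym2 ℕ) :=
  {s(1, 2), s(1, 4), s(1, 5), s(1, 6), s(1, 7), s(2, 3), s(2, 5), s(2, 7), s(3, 4), s(3, 5), s(3, 6), s(3, 7), s(4, 5), s(4, 7), s(5, 6), s(6, 7)}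

/-- `M` has graph G1233: for `i ≠ j`, `M i j ≠ 0` iff `{i+1, j+1}` is an edge of G1233. -/
def HasGraphG1233 (M : Matrix (Fin 7) (Fin 7) ℂ) : Prop :=
  ∀ i j : Fin 7, i ≠ j → (M i j ≠ 0 ↔ s((i : ℕ) + 1, (j : ℕ) + 1) ∈ edgesG1233)

/-- Gram vectors matrix: columns are vectors in ℂ³ for the 7 vertices. -/
noncomputable def gramA : Matrix (Fin 3) (Fin 7) ℂ :=
  !![1,1,1,0,1,0,1; 1,0,1,1,2,0,1; 1,0,-2,0,3,1,-1]

lemma vec7_five {α : Type*} (a b c d e f g : α) : ![a,b,c,d,e,f,g] 5 = f := rfl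
lemma vec7_six {α : Type*} (a b c d e f g : α) : ![a,b,c,d,e,f,g] 6 = g := rfl

/-- Index selection for vertices 2, 4, 6 (a set of pairwise non-adjacent vertices). -/
def fIdx : Fin 3 → Fin 7 := ![1, 3, 5]

lemma fIdx_inj : ∀ k l : Fin 3, k ≠ l → fIdx k ≠ fIdx l := by decide

lemma fIdx_ne_zero : ∀ k : Fin 3, fIdx k ≠ 0 := by decide

lemma fIdx_nonedge : ∀ k l : Fin 3, k ≠ l →
    s((fIdx k : ℕ) + 1, (fIdx l : ℕ) + 1) ∉ edgesG1233 := by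
  intro k l h
  fin_cases k <;> fin_cases l
  · exact absurd rfl h
  · show s(2, 4) ∉ edgesG1233; simp [edgesG1233]
  · show s(2, 6) ∉ edgesG1233; simp [edgesG1233]
  · show s(4, 2) ∉ edgesG1233; simp [edgesG1233]
  · exact absurd rfl h
  · show s(4, 6) ∉ edgesG1233; simp [edgesG1233]
  · show s(6, 2) ∉ edgesG1233; simp [edgesG1233]
  · show s(6, 4) ∉ edgesG1233; simp [edgesG1233]
  · exact absurd rfl h

lemma fIdx_edge_zero : ∀ k : Fin 3, s((fIdx k : ℕ) + 1, (0 : Fin 7) + 1) ∈ edgesG1233 := by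
  intro k
  fin_cases k
  · show s(2, 1) ∈ edgesG1233; simp [edgesG1233]
  · show s(4, 1) ∈ edgesG1233; simp [edgesG1233]
  · show s(6, 1) ∈ edgesG1233; simp [edgesG1233]

lemma gramA_rank : gramA.rank = 3 := by
  apply le_antisymm
  · simpa using gramA.rank_le_card_height
  · have h1 : gramA.submatrix id fIdx = (1 : Matrix (Fin 3) (Fin 3) ℂ) := by
      ext i j
      fin_cases i <;> fin_cases j <;> rfl
    have h2 : gramA * (1 : Matrix (Fin 7) (Fin 7) ℂ).submatrix (Equiv.refl (Fin 7)) fIdx =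
        gramA.submatrix id fIdx := by
      rw [Matrix.mul_submatrix_one]
      rfl
    have h3 := Matrix.rank_mul_le_left gramA
      ((1 : Matrix (Fin 7) (Fin 7) ℂ).submatrix (Equiv.refl (Fin 7)) fIdx)
    rw [h2, h1, Matrix.rank_one] at h3
    simpa using h3

set_option maxHeartbeats 1600000 in
/-- The Gram matrix of the chosen vectors has graph G1233. -/
lemma gram_hasGraph : HasGraphG1233 (gramAᴴ * gramA) := by
  intro i j hij
  fin_cases i <;> fin_cases j <;>
    first
      | exact absurd rfl hij
      | simp [gramA, edgesG1233, Matrix.mul_apply, Fin.sum_univ_three,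
          Matrix.vecHead, Matrix.vecTail, vec7_five, vec7_six, map_ofNat] <;> norm_num

/-- In a PSD matrix, a zero diagonal entry forces the whole row to vanish. -/
lemma psd_row_zero {M : Matrix (Fin 7) (Fin 7) ℂ} (hM : M.PosSemidef) {i : Fin 7}
    (h : M i i = 0) (j : Fin 7) : M i j = 0 := by
  have hx : star (Pi.single i (1:ℂ)) ⬝ᵥ M *ᵥ Pi.single i (1:ℂ) = 0 := by
    simp [Matrix.mulVec_single, dotProduct, Pi.single_apply, h]
  have h0 := (hM.dotProduct_mulVec_zero_iff (Pi.single i 1)).mp hx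
  have hji : M j i = 0 := by
    have := congrFun h0 j
    simpa [Matrix.mulVec_single] using this
  calc M i j = star (M j i) := by rw [← Matrix.conjTranspose_apply, hM.isHermitian.eq]
  _ = 0 := by rw [hji]; simp

/-- Lower bound: any PSD matrix with graph G1233 has rank at least 3. -/
lemma msr_lower (M : Matrix (Fin 7) (Fin 7) ℂ) (hPSD : M.PosSemidef)
    (hG : HasGraphG1233 M) : 3 ≤ M.rank := by
  have hdiagzero : ∀ k l : Fin 3, k ≠ l → M (fIdx k) (fIdx l) = 0 := by
    intro k l hkl
    by_contra hne
    exact fIdx_nonedge k l hkl ((hG _ _ (fIdx_inj k l hkl)).mp hne)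
  have hdiagne : ∀ k : Fin 3, M (fIdx k) (fIdx k) ≠ 0 := by
    intro k h0
    have hz : M (fIdx k) 0 = 0 := psd_row_zero hPSD h0 0
    exact (hz ▸ (hG (fIdx k) 0 (fIdx_ne_zero k)).mpr (fIdx_edge_zero k)) rfl
  have hsub : M.submatrix fIdx fIdx = Matrix.diagonal (fun k => M (fIdx k) (fIdx k)) := by
    ext k l
    by_cases hkl : k = l
    · subst hkl; simp
    · rw [Matrix.diagonal_apply_ne _ hkl]
      exact hdiagzero k l hkl
  have hrank3 : (M.submatrix fIdx fIdx).rank = 3 := by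
    rw [hsub]
    have : IsUnit (Matrix.diagonal (fun k => M (fIdx k) (fIdx k))) := by
      rw [Matrix.isUnit_iff_isUnit_det, Matrix.det_diagonal, isUnit_iff_ne_zero]
      exact Finset.prod_ne_zero_iff.mpr fun k _ => hdiagne k
    simpa using Matrix.rank_of_isUnit _ this
  have key : M.submatrix fIdx fIdx =
      ((1 : Matrix (Fin 7) (Fin 7) ℂ).submatrix fIdx (Equiv.refl (Fin 7))) *
        (M * ((1 : Matrix (Fin 7) (Fin 7) ℂ).submatrix (Equiv.refl (Fin 7)) fIdx)) := by
    rw [Matrix.mul_submatrix_one, Matrix.one_submatrix_mul]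
    simp
  have h1 := Matrix.rank_mul_le_right
    ((1 : Matrix (Fin 7) (Fin 7) ℂ).submatrix fIdx (Equiv.refl (Fin 7)))
    (M * ((1 : Matrix (Fin 7) (Fin 7) ℂ).submatrix (Equiv.refl (Fin 7)) fIdx))
  have h2 := Matrix.rank_mul_le_left M
    ((1 : Matrix (Fin 7) (Fin 7) ℂ).submatrix (Equiv.refl (Fin 7)) fIdx)
  rw [← key, hrank3] at h1
  exact h1.trans h2

/-- msr(G1233) = 3. -/
theorem msr_G1233 :
    (∃ M : Matrix (Fin 7) (Fin 7) ℂ, M.PosSemidef ∧ HasGraphG1233 M ∧ M.rank = 3) ∧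
    (∀ M : Matrix (Fin 7) (Fin 7) ℂ, M.PosSemidef → HasGraphG1233 M → 3 ≤ M.rank) := by
  refine ⟨⟨gramAᴴ * gramA, Matrix.posSemidef_conjTranspose_mul_self gramA, gram_hasGraph, ?_⟩,
    msr_lower⟩
  rw [Matrix.rank_conjTranspose_mul_self, gramA_rank]
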